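/- With Ω, T, p, q as above, for every input x, every 1 ≤ t ≤ T, and every function δ : Ω^t → [−1/2, 1/2] (extended by δ(y) = 0 for sequences y of length ≠ t): E_{y∼M(x, ∅, P^t)}[δ(y)] ≤ E_{y∼M(x, ∅, Q^t)}[δ(y)] + Σ_{k=1}^{t} E_k(x), where E_k(x) = E_{y∼q_{≤T}(·|x)}[ 1{k ≤ |y|} · D_TVD(p(·|x,y_{<k}), q(·|x,y_{<k})) ]. -/

import Mathlib

open Finset

/-- Total variation distance between two distributions on a finite set. -/
noncomputable def tvd {Ω : Type*} [Fintype Ω] (P Q : Ω → ℝ) : ℝ :=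
  (1 / 2) * ∑ c, |P c - Q c|

/-- `IsDist P`: `P` is a probability distribution on the finite set `Ω`. -/
def IsDist {Ω : Type*} [Fintype Ω] (P : Ω → ℝ) : Prop :=
  (∀ c, 0 ≤ P c) ∧ ∑ c, P c = 1

/-- A next-token model: for every input `x` and every prefix, a next-token distribution. -/
def IsModel {Ω ι : Type*} [Fintype Ω] (p : ι → List Ω → Ω → ℝ) : Prop :=
  ∀ x pre, IsDist (p x pre)

/-- `Stopped eos T y`: `y` is a completed output sequence for horizon `T`: it is nonempty,
has length at most `T`, contains the end-of-sequence token at no position except possibly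
the last one, and either ends with `eos` or has length exactly `T`. -/
def Stopped {Ω : Type*} [DecidableEq Ω] (eos : Ω) (T : ℕ) (y : List Ω) : Prop :=
  y ≠ [] ∧ y.length ≤ T ∧ eos ∉ y.dropLast ∧ (y.getLast? = some eos ∨ y.length = T)

open Classical in
/-- Probability that autoregressive sampling — where the next-token distribution used to
sample the `(t+1)`-st token given the length-`t` prefix `pre` is `ms t pre`, with horizon `T`
and end-of-sequence token `eos` — outputs exactly the sequence `y`. -/
noncomputable def seqProb {Ω : Type*} [Fintype Ω] [DecidableEq Ω] (eos : Ω)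
    (ms : ℕ → List Ω → Ω → ℝ) (T : ℕ) (y : List Ω) : ℝ :=
  if Stopped eos T y then ∏ t ∈ Finset.range y.length, ms t (y.take t) (y.getD t eos) else 0

/-- Expectation of `f` under the induced distribution over output sequences. -/
noncomputable def seqExp {Ω : Type*} [Fintype Ω] [DecidableEq Ω] (eos : Ω)
    (ms : ℕ → List Ω → Ω → ℝ) (T : ℕ) (f : List Ω → ℝ) : ℝ :=
  ∑ n ∈ Finset.Icc 1 T, ∑ v : Fin n → Ω, seqProb eos ms T (List.ofFn v) * f (List.ofFn v)

/-- Expectation under `p_{≤T}(·|x)`, the output-sequence distribution of the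
autoregressive model with next-token distributions `p`. -/
noncomputable def modelExp {Ω ι : Type*} [Fintype Ω] [DecidableEq Ω] (eos : Ω)
    (p : ι → List Ω → Ω → ℝ) (x : ι) (T : ℕ) (f : List Ω → ℝ) : ℝ :=
  seqExp eos (fun _ pre => p x pre) T f

/-- Expectation under the mixed-model sequence distribution `M(x, ∅, z)`, where the letter
`z_t` (`true` = letter `P`, i.e. target model `p`; `false` = letter `Q`, i.e. draft model `q`)
selects the model used to sample the `t`-th token, with horizon `|z|` and empty prefix. -/
noncomputable def mixExp {Ω ι : Type*} [Fintype Ω] [DecidableEq Ω] (eos : Ω)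
    (p q : ι → List Ω → Ω → ℝ) (x : ι) (z : List Bool) (f : List Ω → ℝ) : ℝ :=
  seqExp eos (fun t pre => if z.getD t true then p x pre else q x pre) z.length f

/-- `Σ_{t=1}^{|y|} D_TVD(p(·|x, y_{<t}), q(·|x, y_{<t}))`. -/
noncomputable def totalLoss {Ω ι : Type*} [Fintype Ω] (p q : ι → List Ω → Ω → ℝ)
    (x : ι) (y : List Ω) : ℝ :=
  ∑ t ∈ Finset.range y.length, tvd (p x (y.take t)) (q x (y.take t))

/-- `1{t ≤ |y|} · D_TVD(p(·|x, y_{<t}), q(·|x, y_{<t}))` for a (1-indexed) position `t`. -/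
noncomputable def stepLoss {Ω ι : Type*} [Fintype Ω] (p q : ι → List Ω → Ω → ℝ)
    (x : ι) (t : ℕ) (y : List Ω) : ℝ :=
  if t ≤ y.length then tvd (p x (y.take (t - 1))) (q x (y.take (t - 1))) else 0

/-- Expected output length `L_p(x) = E_{y∼p_{≤T}(·|x)}[|y|]` of the target model. -/
noncomputable def Lp {Ω ι : Type*} [Fintype Ω] [DecidableEq Ω] (eos : Ω)
    (p : ι → List Ω → Ω → ℝ) (x : ι) (T : ℕ) : ℝ :=
  modelExp eos p x T (fun y => (y.length : ℝ))

/-- Sequence-level acceptance rate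
`α(x) = 1 − E_{y∼p_{≤T}(·|x)}[Σ_{t=1}^{|y|} D_TVD(p(·|x,y_{<t}), q(·|x,y_{<t}))] / L_p(x)`. -/
noncomputable def acceptRate {Ω ι : Type*} [Fintype Ω] [DecidableEq Ω] (eos : Ω)
    (p q : ι → List Ω → Ω → ℝ) (x : ι) (T : ℕ) : ℝ :=
  1 - modelExp eos p x T (totalLoss p q x) / Lp eos p x T

/-- On-policy distillation loss
`ε(x) = E_{y∼q_{≤T}(·|x)}[(1/|y|) Σ_{t=1}^{|y|} D_TVD(p(·|x,y_{<t}), q(·|x,y_{<t}))]`. -/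
noncomputable def onPolicyLoss {Ω ι : Type*} [Fintype Ω] [DecidableEq Ω] (eos : Ω)
    (p q : ι → List Ω → Ω → ℝ) (x : ι) (T : ℕ) : ℝ :=
  modelExp eos q x T (fun y => (1 / (y.length : ℝ)) * totalLoss p q x y)

/-- `A_t(x) = E_{y∼p_{≤T}(·|x)}[1{t ≤ |y|} · D_TVD(p(·|x,y_{<t}), q(·|x,y_{<t}))]`. -/
noncomputable def Aterm {Ω ι : Type*} [Fintype Ω] [DecidableEq Ω] (eos : Ω)
    (p q : ι → List Ω → Ω → ℝ) (x : ι) (T t : ℕ) : ℝ :=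
  modelExp eos p x T (stepLoss p q x t)

/-- `E_t(x) = E_{y∼q_{≤T}(·|x)}[1{t ≤ |y|} · D_TVD(p(·|x,y_{<t}), q(·|x,y_{<t}))]`. -/
noncomputable def Eterm {Ω ι : Type*} [Fintype Ω] [DecidableEq Ω] (eos : Ω)
    (p q : ι → List Ω → Ω → ℝ) (x : ι) (T t : ℕ) : ℝ :=
  modelExp eos q x T (stepLoss p q x t)


set_option linter.unusedSectionVars false
set_option maxHeartbeats 1000000

section SD
variable {Ω : Type*} [Fintype Ω] [DecidableEq Ω] (eos : Ω)

open Classical in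
noncomputable def sdRest (ms : ℕ → List Ω → Ω → ℝ) (H : ℕ) (u : List Ω) (g : List Ω → ℝ) : ℝ :=
  ∑ i ∈ Finset.range (H - u.length), ∑ w : Fin (i+1) → Ω,
    if Stopped eos H (u ++ List.ofFn w) then
      (∏ j : Fin (i+1), ms (u.length + (j:ℕ)) (u ++ (List.ofFn w).take (j:ℕ)) (w j)) * g (u ++ List.ofFn w)
    else 0

lemma sdRest_of_le (ms : ℕ → List Ω → Ω → ℝ) {H : ℕ} {u : List Ω} (h : H ≤ u.length)
    (g : List Ω → ℝ) : sdRest eos ms H u g = 0 := by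
  unfold sdRest
  rw [Nat.sub_eq_zero_of_le h]
  simp

lemma sdRest_eos_mem (ms : ℕ → List Ω → Ω → ℝ) (H : ℕ) {u : List Ω} (h : eos ∈ u)
    (g : List Ω → ℝ) : sdRest eos ms H u g = 0 := by
  unfold sdRest
  refine Finset.sum_eq_zero fun i _ => Finset.sum_eq_zero fun w _ => ?_
  rw [if_neg]
  rintro ⟨-, -, hnm, -⟩
  apply hnm
  rw [List.dropLast_append_of_ne_nil (by simp : List.ofFn w ≠ [])]
  exact List.mem_append_left _ h

lemma sum_pi_succ (n : ℕ) (f : (Fin (n+1) → Ω) → ℝ) :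
    ∑ w : Fin (n+1) → Ω, f w = ∑ c : Ω, ∑ w : Fin n → Ω, f (Fin.cons c w) := by
  rw [← (Fin.consEquiv fun _ : Fin (n+1) => Ω).sum_comp f, Fintype.sum_prod_type]; rfl

lemma stopped_concat_iff {u : List Ω} (hu : eos ∉ u) {H : ℕ} (hlen : u.length < H) (c : Ω) :
    Stopped eos H (u ++ [c]) ↔ (c = eos ∨ u.length + 1 = H) := by
  unfold Stopped
  rw [List.dropLast_concat, List.getLast?_concat]
  simp only [List.length_append, List.length_cons, List.length_nil]
  constructor
  · rintro ⟨-, -, -, h | h⟩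
    · exact Or.inl (by injection h)
    · exact Or.inr (by omega)
  · rintro (h | h)
    · exact ⟨by simp, by omega, hu, Or.inl (by rw [h])⟩
    · exact ⟨by simp, by omega, hu, Or.inr (by omega)⟩

open Classical in
lemma sdRest_rec (ms : ℕ → List Ω → Ω → ℝ) {H : ℕ} {u : List Ω} (hu : eos ∉ u)
    (hlen : u.length < H) (g : List Ω → ℝ) :
    sdRest eos ms H u g
      = ∑ c : Ω, ms u.length u c *
          ((if c = eos ∨ u.length + 1 = H then g (u ++ [c]) else 0)
            + sdRest eos ms H (u ++ [c]) g) := by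
  obtain ⟨e, he⟩ : ∃ e, H - u.length = e + 1 := ⟨H - u.length - 1, by omega⟩
  set T : ℕ → Ω → ℝ := fun i c => ∑ w : Fin i → Ω,
    if Stopped eos H ((u ++ [c]) ++ List.ofFn w) then
      (∏ j : Fin i, ms ((u ++ [c]).length + (j:ℕ)) ((u ++ [c]) ++ (List.ofFn w).take (j:ℕ)) (w j))
        * g ((u ++ [c]) ++ List.ofFn w)
    else 0 with hT
  have hbody : ∀ i, ∑ w : Fin (i+1) → Ω,
      (if Stopped eos H (u ++ List.ofFn w) then
        (∏ j : Fin (i+1), ms (u.length + (j:ℕ)) (u ++ (List.ofFn w).take (j:ℕ)) (w j))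
          * g (u ++ List.ofFn w)
      else 0) = ∑ c : Ω, ms u.length u c * T i c := by
    intro i
    rw [sum_pi_succ]
    refine Finset.sum_congr rfl fun c _ => ?_
    rw [hT]
    rw [Finset.mul_sum]
    refine Finset.sum_congr rfl fun w _ => ?_
    have hofn : List.ofFn (Fin.cons c w) = c :: List.ofFn w := by
      rw [List.ofFn_succ]
      simp
    have happ : u ++ List.ofFn (Fin.cons c w) = (u ++ [c]) ++ List.ofFn w := by
      rw [hofn]; simp
    have hprod : (∏ j : Fin (i+1), ms (u.length + (j:ℕ))
          (u ++ (List.ofFn (Fin.cons c w)).take (j:ℕ)) ((Fin.cons c w : Fin (i+1) → Ω) j))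
        = ms u.length u c * ∏ j : Fin i, ms ((u ++ [c]).length + (j:ℕ))
            ((u ++ [c]) ++ (List.ofFn w).take (j:ℕ)) (w j) := by
      rw [Fin.prod_univ_succ]
      congr 1
      · simp [hofn]
      · refine Finset.prod_congr rfl fun j _ => ?_
        rw [Fin.cons_succ, Fin.val_succ, hofn, List.take_succ_cons]
        congr 1
        · simp; omega
        · simp
    rw [happ, hprod, mul_ite, mul_zero, mul_assoc]
  unfold sdRest
  rw [he]
  calc ∑ i ∈ Finset.range (e+1), ∑ w : Fin (i+1) → Ω,
      (if Stopped eos H (u ++ List.ofFn w) then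
        (∏ j : Fin (i+1), ms (u.length + (j:ℕ)) (u ++ (List.ofFn w).take (j:ℕ)) (w j))
          * g (u ++ List.ofFn w)
      else 0)
      = ∑ i ∈ Finset.range (e+1), ∑ c : Ω, ms u.length u c * T i c :=
        Finset.sum_congr rfl fun i _ => hbody i
    _ = ∑ c : Ω, ∑ i ∈ Finset.range (e+1), ms u.length u c * T i c := Finset.sum_comm
    _ = ∑ c : Ω, ms u.length u c * ∑ i ∈ Finset.range (e+1), T i c := by
        refine Finset.sum_congr rfl fun c _ => ?_; rw [Finset.mul_sum]
    _ = ∑ c : Ω, ms u.length u c *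
          ((if c = eos ∨ u.length + 1 = H then g (u ++ [c]) else 0)
            + sdRest eos ms H (u ++ [c]) g) := by
        refine Finset.sum_congr rfl fun c _ => ?_
        congr 1
        rw [Finset.sum_range_succ']
        have hT0 : T 0 c = (if c = eos ∨ u.length + 1 = H then g (u ++ [c]) else 0) := by
          rw [hT]
          dsimp only
          rw [Fintype.sum_unique]
          simp only [List.ofFn_zero, List.append_nil, Finset.univ_eq_empty, Finset.prod_empty,
            one_mul]
          by_cases h : c = eos ∨ u.length + 1 = H
          · rw [if_pos ((stopped_concat_iff eos hu hlen c).2 h), if_pos h]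
          · rw [if_neg (fun hs => h ((stopped_concat_iff eos hu hlen c).1 hs)), if_neg h]
        have hTr : ∑ i ∈ Finset.range e, T (i+1) c = sdRest eos ms H (u ++ [c]) g := by
          unfold sdRest
          have : H - (u ++ [c]).length = e := by simp; omega
          rw [this, hT]
        rw [hT0, hTr, add_comm]

lemma sdRest_congr_ms {ms ms' : ℕ → List Ω → Ω → ℝ} (H : ℕ) (u : List Ω) (g : List Ω → ℝ)
    (h : ∀ j w c, u.length ≤ j → ms j w c = ms' j w c) :
    sdRest eos ms H u g = sdRest eos ms' H u g := by
  unfold sdRest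
  refine Finset.sum_congr rfl fun i _ => Finset.sum_congr rfl fun w _ => ?_
  congr 2
  exact Finset.prod_congr rfl fun j _ => h _ _ _ (Nat.le_add_right _ _)

lemma sdRest_congr_g (ms : ℕ → List Ω → Ω → ℝ) (H : ℕ) (u : List Ω) {g g' : List Ω → ℝ}
    (h : ∀ w : List Ω, w ≠ [] → g (u ++ w) = g' (u ++ w)) :
    sdRest eos ms H u g = sdRest eos ms H u g' := by
  unfold sdRest
  refine Finset.sum_congr rfl fun i _ => Finset.sum_congr rfl fun w _ => ?_
  congr 1
  rw [h _ (by simp)]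

lemma sdRest_const (ms : ℕ → List Ω → Ω → ℝ) (H : ℕ) (u : List Ω) (a : ℝ) :
    sdRest eos ms H u (fun _ => a) = a * sdRest eos ms H u (fun _ => 1) := by
  unfold sdRest
  rw [Finset.mul_sum]
  refine Finset.sum_congr rfl fun i _ => ?_
  rw [Finset.mul_sum]
  refine Finset.sum_congr rfl fun w _ => ?_
  rw [mul_ite, mul_zero]
  congr 1
  ring

lemma sdRest_nonneg {ms : ℕ → List Ω → Ω → ℝ} (h0 : ∀ j w c, 0 ≤ ms j w c)
    (H : ℕ) (u : List Ω) {g : List Ω → ℝ} (hg : ∀ y, 0 ≤ g y) :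
    0 ≤ sdRest eos ms H u g := by
  unfold sdRest
  refine Finset.sum_nonneg fun i _ => Finset.sum_nonneg fun w _ => ?_
  split
  · exact mul_nonneg (Finset.prod_nonneg fun j _ => h0 _ _ _) (hg _)
  · exact le_refl 0

lemma sdRest_mass {ms : ℕ → List Ω → Ω → ℝ} (hms : ∀ j w, (∀ c, 0 ≤ ms j w c) ∧ ∑ c, ms j w c = 1)
    {H : ℕ} : ∀ d {u : List Ω}, eos ∉ u → u.length < H → H - u.length ≤ d →
    sdRest eos ms H u (fun _ => 1) = 1 := by
  intro d
  induction d with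
  | zero => intro u _ h1 h2; omega
  | succ d ih =>
    intro u hu hlen hd
    rw [sdRest_rec eos ms hu hlen]
    have : ∀ c : Ω, ((if c = eos ∨ u.length + 1 = H then (fun _ : List Ω => (1:ℝ)) (u ++ [c]) else 0)
        + sdRest eos ms H (u ++ [c]) (fun _ => 1)) = 1 := by
      intro c
      by_cases hc : c = eos
      · rw [if_pos (Or.inl hc), sdRest_eos_mem eos ms H (by simp [hc])]
        norm_num
      · by_cases hH : u.length + 1 = H
        · rw [if_pos (Or.inr hH), sdRest_of_le eos ms (by simp; omega)]
          norm_num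
        · rw [if_neg (by tauto), ih (by simp [hc, Ne.symm hc, hu]) (by simp; omega) (by simp; omega)]
          norm_num
    calc ∑ c : Ω, ms u.length u c * _ = ∑ c : Ω, ms u.length u c := by
          refine Finset.sum_congr rfl fun c _ => ?_; rw [this c, mul_one]
      _ = 1 := (hms u.length u).2

lemma sdRest_abs_le {ms : ℕ → List Ω → Ω → ℝ} (h0 : ∀ j w c, 0 ≤ ms j w c)
    (H : ℕ) (u : List Ω) {g : List Ω → ℝ} {C : ℝ} (hC : 0 ≤ C) (hg : ∀ y, |g y| ≤ C) :
    |sdRest eos ms H u g| ≤ C * sdRest eos ms H u (fun _ => 1) := by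
  unfold sdRest
  rw [Finset.mul_sum]
  refine (Finset.abs_sum_le_sum_abs _ _).trans (Finset.sum_le_sum fun i _ => ?_)
  rw [Finset.mul_sum]
  refine (Finset.abs_sum_le_sum_abs _ _).trans (Finset.sum_le_sum fun w _ => ?_)
  split
  · rw [abs_mul, mul_one, abs_of_nonneg (Finset.prod_nonneg fun j _ => h0 _ _ _), mul_comm C]
    exact mul_le_mul_of_nonneg_left (hg _) (Finset.prod_nonneg fun j _ => h0 _ _ _)
  · simp

end SD

section Main
variable {Ω ι : Type*} [Fintype Ω] [DecidableEq Ω]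

/-- Hybrid model: draft `q` for the first `k` steps, then target `p`. -/
noncomputable def hybM (p q : ι → List Ω → Ω → ℝ) (x : ι) (k j : ℕ) (pre : List Ω) : Ω → ℝ :=
  if j < k then q x pre else p x pre

lemma hybM_lt (p q : ι → List Ω → Ω → ℝ) (x : ι) {k j : ℕ} (h : j < k) (pre : List Ω) :
    hybM p q x k j pre = q x pre := if_pos h

lemma hybM_ge (p q : ι → List Ω → Ω → ℝ) (x : ι) {k j : ℕ} (h : k ≤ j) (pre : List Ω) :
    hybM p q x k j pre = p x pre := if_neg (not_lt.2 h)

lemma getD_ofFn (eos : Ω) {n : ℕ} (w : Fin n → Ω) (j : Fin n) :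
    (List.ofFn w).getD (j : ℕ) eos = w j := by
  rw [List.getD_eq_getElem?_getD]
  simp

lemma seqExp_eq_sdRest (eos : Ω) (ms : ℕ → List Ω → Ω → ℝ) (H : ℕ) (f : List Ω → ℝ) :
    seqExp eos ms H f = sdRest eos ms H [] f := by
  unfold seqExp sdRest
  rw [show Finset.Icc 1 H = Finset.Ico 1 (H+1) by rw [Finset.Ico_add_one_right_eq_Icc],
    Finset.sum_Ico_eq_sum_range]
  simp only [Nat.add_sub_cancel, List.length_nil, Nat.sub_zero]
  refine Finset.sum_congr rfl fun i _ => ?_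
  rw [Nat.add_comm 1 i]
  refine Finset.sum_congr rfl fun w _ => ?_
  unfold seqProb
  rw [ite_mul, zero_mul]
  by_cases hs : Stopped eos H (List.ofFn w)
  · rw [if_pos hs, if_pos (by simpa using hs)]
    congr 1
    rw [show (List.ofFn w).length = i + 1 from List.length_ofFn,
      ← Fin.prod_univ_eq_prod_range (fun t => ms t ((List.ofFn w).take t) ((List.ofFn w).getD t eos)) (i+1)]
    refine Finset.prod_congr rfl fun j _ => ?_
    simp only [Nat.zero_add, List.nil_append]
    congr 1
    exact getD_ofFn eos w j
  · rw [if_neg hs, if_neg (by simpa using hs)]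
end Main

/-- **DistillSpec, telescoping upper bound.** For `1 ≤ t ≤ T` and any
`δ : Ω^t → [−1/2,1/2]` (extended by `0` to sequences of length `≠ t`),
`E_{y∼M(x,∅,Pᵗ)}[δ(y)] ≤ E_{y∼M(x,∅,Qᵗ)}[δ(y)] + Σ_{k=1}^{t} E_k(x)`. -/
theorem mixExp_P_le_Q_add_sum
    {Ω ι : Type*} [Fintype Ω] [DecidableEq Ω] (eos : Ω)
    (T : ℕ) (hT : 1 ≤ T)
    (p q : ι → List Ω → Ω → ℝ) (hp : IsModel p) (hq : IsModel q)
    (x : ι) (t : ℕ) (ht1 : 1 ≤ t) (ht2 : t ≤ T)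
    (δ : List Ω → ℝ)
    (hδ1 : ∀ y, δ y ∈ Set.Icc (-(1 / 2) : ℝ) (1 / 2))
    (hδ2 : ∀ y : List Ω, y.length ≠ t → δ y = 0) :
    mixExp eos p q x (List.replicate t true) δ ≤
      mixExp eos p q x (List.replicate t false) δ
        + ∑ k ∈ Finset.Icc 1 t, Eterm eos p q x T k := by
  classical
  have tvdnn : ∀ (P Q : Ω → ℝ), 0 ≤ tvd P Q := by
    intro P Q; unfold tvd; positivity
  have hslnn : ∀ k y, 0 ≤ stepLoss p q x k y := by
    intro k y; unfold stepLoss; split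
    · exact tvdnn _ _
    · exact le_rfl
  have hδabs : ∀ y, |δ y| ≤ 1/2 := fun y => abs_le.mpr ⟨(hδ1 y).1, (hδ1 y).2⟩
  have hybnn : ∀ k j w c, 0 ≤ hybM p q x k j w c := by
    intro k j w c; unfold hybM; split
    · exact (hq x w).1 c
    · exact (hp x w).1 c
  have hybdist : ∀ k j (w : List Ω), (∀ c, 0 ≤ hybM p q x k j w c) ∧ ∑ c, hybM p q x k j w c = 1 := by
    intro k j w; unfold hybM; split
    · exact hq x w
    · exact hp x w
  have qmnn : ∀ (j : ℕ) (w : List Ω) c, 0 ≤ (fun (_ : ℕ) pre => q x pre) j w c := by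
    intro j w c; exact (hq x w).1 c
  have qmdist : ∀ (j : ℕ) (w : List Ω), (∀ c, 0 ≤ (fun (_ : ℕ) pre => q x pre) j w c) ∧
      ∑ c, (fun (_ : ℕ) pre => q x pre) j w c = 1 := fun j w => hq x w
  -- key single-swap step
  have key : ∀ k, k < t →
      sdRest eos (hybM p q x k) t [] δ - sdRest eos (hybM p q x (k+1)) t [] δ ≤
        sdRest eos (fun (_ : ℕ) pre => q x pre) T [] (stepLoss p q x (k+1)) := by
    intro k hk
    have claim : ∀ d (u : List Ω), eos ∉ u → u.length + d = k →
        sdRest eos (hybM p q x k) t u δ - sdRest eos (hybM p q x (k+1)) t u δ ≤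
          sdRest eos (fun (_ : ℕ) pre => q x pre) T u (stepLoss p q x (k+1)) := by
      intro d
      induction d with
      | zero =>
        intro u hu hul
        have hk0 : u.length = k := by omega
        have hlt : u.length < t := by omega
        have hltT : u.length < T := by omega
        have hR : ∀ c, sdRest eos (hybM p q x (k+1)) t (u++[c]) δ =
            sdRest eos (hybM p q x k) t (u++[c]) δ := by
          intro c
          refine sdRest_congr_ms eos t (u++[c]) δ fun j w c' hj => ?_
          have hj' : k + 1 ≤ j := by simpa [hk0] using hj
          rw [hybM_ge p q x (by omega), hybM_ge p q x (by omega)]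
        have hE : ∀ c, |(if c = eos ∨ u.length + 1 = t then δ (u ++ [c]) else 0)
            + sdRest eos (hybM p q x k) t (u++[c]) δ| ≤ 1/2 := by
          intro c
          by_cases hc : c = eos ∨ u.length + 1 = t
          · have hz : sdRest eos (hybM p q x k) t (u++[c]) δ = 0 := by
              rcases hc with hc | hc
              · exact sdRest_eos_mem eos _ t (by simp [hc]) δ
              · exact sdRest_of_le eos _ (by simp; omega) δ
            rw [if_pos hc, hz, add_zero]
            exact hδabs _
          · push_neg at hc
            rw [if_neg (by tauto), zero_add]
            have h1 : (u++[c]).length < t := by simp; omega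
            have hmem : eos ∉ u ++ [c] := by
              simp only [List.mem_append, List.mem_singleton]
              rintro (h | h)
              · exact hu h
              · exact hc.1 h.symm
            calc |sdRest eos (hybM p q x k) t (u++[c]) δ|
                ≤ (1/2) * sdRest eos (hybM p q x k) t (u++[c]) (fun _ => 1) :=
                  sdRest_abs_le eos (hybnn k) t (u++[c]) (by norm_num) hδabs
              _ = 1/2 := by
                  rw [sdRest_mass eos (hybdist k) (t - (u++[c]).length) hmem h1 le_rfl, mul_one]
        have htake : ∀ l2 : List Ω, (u ++ l2).take k = u := fun l2 => List.take_left' hk0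
        have hΦ : ∀ c, (if c = eos ∨ u.length + 1 = T then stepLoss p q x (k+1) (u ++ [c]) else 0)
            + sdRest eos (fun (_ : ℕ) pre => q x pre) T (u++[c]) (stepLoss p q x (k+1))
            = tvd (p x u) (q x u) := by
          intro c
          have hsl1 : stepLoss p q x (k+1) (u ++ [c]) = tvd (p x u) (q x u) := by
            unfold stepLoss
            rw [if_pos (by simp; omega)]
            simp only [Nat.add_sub_cancel]
            rw [htake [c]]
          by_cases hc : c = eos
          · rw [if_pos (Or.inl hc), hsl1,
              sdRest_eos_mem eos _ T (by simp [hc]) _, add_zero]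
          · by_cases hT' : u.length + 1 = T
            · rw [if_pos (Or.inr hT'), hsl1, sdRest_of_le eos _ (by simp; omega) _, add_zero]
            · have hmem : eos ∉ u ++ [c] := by
                simp only [List.mem_append, List.mem_singleton]
                rintro (h | h)
                · exact hu h
                · exact hc h.symm
              rw [if_neg (by tauto), zero_add]
              rw [sdRest_congr_g eos _ T (u++[c]) (g' := fun _ => tvd (p x u) (q x u))
                (fun w hw => by
                  unfold stepLoss
                  rw [if_pos (by simp; omega)]
                  simp only [Nat.add_sub_cancel]
                  rw [List.append_assoc, htake ([c] ++ w)])]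
              rw [sdRest_const, sdRest_mass eos qmdist (T - (u++[c]).length) hmem
                (by simp; omega) le_rfl, mul_one]
        rw [sdRest_rec eos (hybM p q x k) hu hlt δ,
          sdRest_rec eos (hybM p q x (k+1)) hu hlt δ,
          sdRest_rec eos (fun (_ : ℕ) pre => q x pre) hu hltT (stepLoss p q x (k+1))]
        calc (∑ c : Ω, hybM p q x k u.length u c *
                ((if c = eos ∨ u.length + 1 = t then δ (u ++ [c]) else 0)
                  + sdRest eos (hybM p q x k) t (u ++ [c]) δ))
              - ∑ c : Ω, hybM p q x (k+1) u.length u c *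
                ((if c = eos ∨ u.length + 1 = t then δ (u ++ [c]) else 0)
                  + sdRest eos (hybM p q x (k+1)) t (u ++ [c]) δ)
            = ∑ c : Ω, (p x u c - q x u c) *
                ((if c = eos ∨ u.length + 1 = t then δ (u ++ [c]) else 0)
                  + sdRest eos (hybM p q x k) t (u ++ [c]) δ) := by
              rw [← Finset.sum_sub_distrib]
              refine Finset.sum_congr rfl fun c _ => ?_
              rw [hR c, hybM_ge p q x (by omega), hybM_lt p q x (by omega)]
              ring
          _ ≤ ∑ c : Ω, |p x u c - q x u c| * (1/2) := by
              refine Finset.sum_le_sum fun c _ => ?_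
              calc (p x u c - q x u c) * _ ≤ |(p x u c - q x u c) * _| := le_abs_self _
                _ = |p x u c - q x u c| * |_| := abs_mul _ _
                _ ≤ |p x u c - q x u c| * (1/2) :=
                    mul_le_mul_of_nonneg_left (hE c) (abs_nonneg _)
          _ = tvd (p x u) (q x u) := by
              rw [← Finset.sum_mul, mul_comm]; rfl
          _ = ∑ c : Ω, (fun (_ : ℕ) pre => q x pre) u.length u c *
                ((if c = eos ∨ u.length + 1 = T then stepLoss p q x (k+1) (u ++ [c]) else 0)
                  + sdRest eos (fun (_ : ℕ) pre => q x pre) T (u ++ [c]) (stepLoss p q x (k+1))) := by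
              rw [Finset.sum_congr rfl (fun c _ => by rw [hΦ c])]
              simp only
              rw [← Finset.sum_mul, (hq x u).2, one_mul]
      | succ d ih =>
        intro u hu hul
        have hltk : u.length < k := by omega
        have hlt : u.length < t := by omega
        have hltT : u.length < T := by omega
        rw [sdRest_rec eos (hybM p q x k) hu hlt δ,
          sdRest_rec eos (hybM p q x (k+1)) hu hlt δ,
          sdRest_rec eos (fun (_ : ℕ) pre => q x pre) hu hltT (stepLoss p q x (k+1))]
        rw [← Finset.sum_sub_distrib]
        refine Finset.sum_le_sum fun c _ => ?_
        rw [hybM_lt p q x (by omega), hybM_lt p q x (by omega)]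
        have hbd : (if c = eos ∨ u.length + 1 = T then stepLoss p q x (k+1) (u ++ [c]) else 0)
            = 0 := by
          split
          · unfold stepLoss
            rw [if_neg (by simp; omega)]
          · rfl
        simp only [hbd, zero_add]
        have hfac : q x u c * ((if c = eos ∨ u.length + 1 = t then δ (u ++ [c]) else 0)
              + sdRest eos (hybM p q x k) t (u ++ [c]) δ)
            - q x u c * ((if c = eos ∨ u.length + 1 = t then δ (u ++ [c]) else 0)
              + sdRest eos (hybM p q x (k+1)) t (u ++ [c]) δ)
            = q x u c * (sdRest eos (hybM p q x k) t (u ++ [c]) δ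
              - sdRest eos (hybM p q x (k+1)) t (u ++ [c]) δ) := by ring
        rw [hfac]
        refine mul_le_mul_of_nonneg_left ?_ ((hq x u).1 c)
        by_cases hc : c = eos
        · rw [sdRest_eos_mem eos _ t (by simp [hc]) δ, sdRest_eos_mem eos _ t (by simp [hc]) δ,
            sub_self]
          exact sdRest_nonneg eos qmnn T _ (hslnn (k+1))
        · have hmem : eos ∉ u ++ [c] := by
            simp only [List.mem_append, List.mem_singleton]
            rintro (h | h)
            · exact hu h
            · exact hc h.symm
          exact ih (u ++ [c]) hmem (by simp; omega)
    exact claim k [] (by simp) (by simp)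
  -- endpoints
  have hA0 : mixExp eos p q x (List.replicate t true) δ = sdRest eos (hybM p q x 0) t [] δ := by
    unfold mixExp
    rw [List.length_replicate, seqExp_eq_sdRest]
    congr 1
    funext j pre
    have : (List.replicate t true).getD j true = true := by
      rw [List.getD_eq_getElem?_getD, List.getElem?_replicate]
      split <;> rfl
    rw [this, hybM_ge p q x (Nat.zero_le j)]
    rfl
  have hAt : mixExp eos p q x (List.replicate t false) δ = sdRest eos (hybM p q x t) t [] δ := by
    unfold mixExp
    rw [List.length_replicate, seqExp_eq_sdRest]
    congr 1
    funext j pre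
    rcases lt_or_ge j t with hj | hj
    · have : (List.replicate t false).getD j true = false := by
        rw [List.getD_eq_getElem?_getD, List.getElem?_replicate, if_pos hj]
        rfl
      rw [this, hybM_lt p q x hj]
      rfl
    · have : (List.replicate t false).getD j true = true := by
        rw [List.getD_eq_getElem?_getD, List.getElem?_replicate, if_neg (by omega)]
        rfl
      rw [this, hybM_ge p q x hj]
      rfl
  have hEt : ∀ k, Eterm eos p q x T k =
      sdRest eos (fun (_ : ℕ) pre => q x pre) T [] (stepLoss p q x k) := by
    intro k
    unfold Eterm modelExp
    exact seqExp_eq_sdRest eos _ T _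
  have tele : ∀ k, k ≤ t → sdRest eos (hybM p q x 0) t [] δ ≤
      sdRest eos (hybM p q x k) t [] δ + ∑ j ∈ Finset.range k, Eterm eos p q x T (j+1) := by
    intro k
    induction k with
    | zero => intro _; simp
    | succ k ih =>
      intro hk1
      have h1 := ih (by omega)
      have h2 := key k (by omega)
      rw [Finset.sum_range_succ, hEt (k+1)]
      linarith
  have hIcc : ∑ k ∈ Finset.Icc 1 t, Eterm eos p q x T k
      = ∑ j ∈ Finset.range t, Eterm eos p q x T (j+1) := by
    rw [show Finset.Icc 1 t = Finset.Ico 1 (t+1) by rw [Finset.Ico_add_one_right_eq_Icc],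
      Finset.sum_Ico_eq_sum_range]
    simp [add_comm]
  rw [hA0, hAt, hIcc]
  exact tele t le_rfl
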